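/- (Theorem 1 a), after Stichtenoth, Satz 4.) Let f ∈ k[X] with f(0) = 0, m := deg f, p ∤ m, m ≥ 2, and (m−1)(p−1) > 2 (i.e. the curve W^p − W = f(X) has genus g(f) = (m−1)(p−1)/2 > 1). Then S(f) is finite and |S(f)| ≤ (m−1)^2; equivalently, |G_{∞,1}(f)| ≤ p(m−1)^2. -/

import Mathlib

open Polynomial

/-- `S(f)`: the set of `y ∈ k` such that `f(X+y) - f(X) - f(y) = P(X) - P(X)^p`
for some polynomial `P` with `P(0) = 0`. -/
def Sf (p : ℕ) {k : Type*} [Field k] (f : k[X]) : Set k :=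
  {y | ∃ P : k[X], P.coeff 0 = 0 ∧
    f.comp (X + C y) - f - C (f.eval y) = P - P ^ p}

/-- The forced coefficients: `cc p f j` is the polynomial in `y` giving the `j`-th
coefficient of any Artin–Schreier witness `P` for `y`. -/
noncomputable def cc (p : ℕ) {k : Type*} [Field k] (f : k[X]) : ℕ → k[X]
  | j =>
    (hasseDeriv j f - C (f.coeff j)) +
      if h : 2 ≤ p ∧ p ∣ j ∧ j ≠ 0 then (cc p f (j / p)) ^ p else 0
  decreasing_by exact Nat.div_lt_self (Nat.pos_of_ne_zero h.2.2) h.1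

lemma coeff_pow_char {p : ℕ} (hp : p.Prime) {k : Type*} [Field k] [CharP k p]
    (q : k[X]) (n : ℕ) :
    (q ^ p).coeff n = if p ∣ n then (q.coeff (n / p)) ^ p else 0 := by
  haveI : ExpChar k p := ExpChar.prime hp
  rw [← Polynomial.map_frobenius_expand p q, coeff_map, Polynomial.coeff_expand hp.pos,
      apply_ite (frobenius k p), frobenius_def, frobenius_def,
      zero_pow hp.ne_zero]

lemma cc_natDegree_le {p : ℕ} {k : Type*} [Field k] (f : k[X]) {m : ℕ}
    (hm : f.natDegree = m) :
    ∀ j : ℕ, 1 ≤ j → (cc p f j).natDegree ≤ j * (m - 1) := by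
  intro j
  induction j using Nat.strong_induction_on with
  | _ j ih =>
    intro hj1
    rw [cc]
    refine (natDegree_add_le _ _).trans (max_le ?_ ?_)
    · refine (natDegree_sub_le _ _).trans (max_le ?_ ?_)
      · refine (natDegree_hasseDeriv_le f j).trans ?_
        rw [hm]
        calc m - j ≤ m - 1 := Nat.sub_le_sub_left hj1 m
        _ ≤ j * (m - 1) := Nat.le_mul_of_pos_left _ hj1
      · simp
    · split_ifs with h
      · refine (natDegree_pow_le).trans ?_
        have h1 : 1 ≤ j / p := Nat.one_le_div_iff (by omega) |>.mpr (Nat.le_of_dvd (by omega) h.2.1)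
        calc p * (cc p f (j / p)).natDegree ≤ p * ((j / p) * (m - 1)) :=
              Nat.mul_le_mul_left p (ih (j / p) (Nat.div_lt_self (by omega) h.1) h1)
        _ = (p * (j / p)) * (m - 1) := by ring
        _ = j * (m - 1) := by rw [Nat.mul_div_cancel' h.2.1]
      · simp

/-- The coefficients of a witness `P` are forced: `P.coeff j = (cc p f j).eval y`. -/
lemma witness_coeff {p : ℕ} (hp : p.Prime) {k : Type*} [Field k] [CharP k p]
    (f : k[X]) (y : k) (P : k[X]) (hP0 : P.coeff 0 = 0)
    (hEq : f.comp (X + C y) - f - C (f.eval y) = P - P ^ p) :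
    ∀ j : ℕ, 1 ≤ j → P.coeff j = (cc p f j).eval y := by
  intro j
  induction j using Nat.strong_induction_on with
  | _ j ih =>
    intro hj1
    have hL : (f.comp (X + C y) - f - C (f.eval y)).coeff j
        = (hasseDeriv j f).eval y - f.coeff j := by
      rw [coeff_sub, coeff_sub, coeff_C, if_neg (by omega), sub_zero,
          ← taylor_apply, taylor_coeff]
    have hR : (P - P ^ p).coeff j
        = P.coeff j - (if p ∣ j then (P.coeff (j / p)) ^ p else 0) := by
      rw [coeff_sub, coeff_pow_char hp]
    rw [hEq] at hL
    rw [cc, eval_add, eval_sub, eval_C]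
    by_cases hd : p ∣ j
    · have h1 : 1 ≤ j / p := Nat.one_le_div_iff hp.pos |>.mpr (Nat.le_of_dvd (by omega) hd)
      rw [dif_pos ⟨hp.two_le, hd, by omega⟩, if_pos hd] at *
      rw [eval_pow, ← ih (j / p) (Nat.div_lt_self (by omega) hp.one_lt) h1]
      rw [hR] at hL
      linear_combination hL
    · rw [dif_neg (by tauto), if_neg hd] at *
      rw [hR] at hL
      simp only [eval_pow, eval_zero]
      linear_combination hL

/-- Theorem 1 a) (Stichtenoth, Satz 4): if `deg f = m` is prime to `p`, `m ≥ 2` and the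
genus `(m-1)(p-1)/2 > 1`, then `S(f)` is finite of cardinality at most `(m-1)^2`,
i.e. `|G_{∞,1}(f)| ≤ p (m-1)^2`. -/
theorem card_Sf_le_sq (p : ℕ) (hp : p.Prime) (k : Type*) [Field k] [IsAlgClosed k] [CharP k p]
    (f : k[X]) (hf0 : f.coeff 0 = 0) (m : ℕ) (hm : f.natDegree = m)
    (hpm : ¬ p ∣ m) (hm2 : 2 ≤ m) (hg : 2 < (m - 1) * (p - 1)) :
    (Sf p f).Finite ∧ (Sf p f).ncard ≤ (m - 1) ^ 2 := by
  classical
  set F : k[X] := cc p f (m - 1) with hF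
  have hfne : f ≠ 0 := fun h => by simp [h] at hm; omega
  have hcm : f.coeff m ≠ 0 := by
    rw [← hm]; exact leadingCoeff_ne_zero.mpr hfne
  have hpd1 : ¬ p ∣ 1 := fun hd => by
    have := Nat.le_of_dvd one_pos hd; have := hp.two_le; omega
  -- F is nonzero: its coefficient at 1 is m * f.coeff m ≠ 0
  have hFcoeff : F.coeff 1 = (m : k) * f.coeff m := by
    rw [hF, cc]
    rw [coeff_add, coeff_sub, coeff_C, if_neg one_ne_zero, sub_zero, hasseDeriv_coeff]
    have h1m : 1 + (m - 1) = m := by omega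
    rw [h1m]
    have hch : m.choose (m - 1) = m := by
      have := Nat.choose_symm (Nat.sub_le m 1)
      rw [Nat.sub_sub_self (by omega)] at this
      rw [← this, Nat.choose_one_right]
    rw [hch]
    have hz : (if h : 2 ≤ p ∧ p ∣ m - 1 ∧ m - 1 ≠ 0 then (cc p f ((m - 1) / p)) ^ p else 0).coeff 1
        = 0 := by
      split_ifs with h
      · rw [coeff_pow_char hp, if_neg hpd1]
      · simp
    rw [hz, add_zero]
  have hFne : F ≠ 0 := fun h => by
    rw [h, coeff_zero] at hFcoeff
    exact mul_ne_zero (fun hc => hpm ((CharP.cast_eq_zero_iff k p m).mp hc)) hcm hFcoeff.symm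
  have hFdeg : F.natDegree ≤ (m - 1) ^ 2 := by
    rw [sq]; exact cc_natDegree_le f hm (m - 1) (by omega)
  -- every y in S(f) is a root of F
  have hroot : ∀ y ∈ Sf p f, F.eval y = 0 := by
    rintro y ⟨P, hP0, hEq⟩
    have hgy : (f.comp (X + C y) - f - C (f.eval y)).natDegree ≤ m - 1 := by
      refine natDegree_le_iff_coeff_eq_zero.mpr fun j hj => ?_
      have hjm : m ≤ j := by omega
      have hhd : hasseDeriv j f = C (f.coeff j) := by
        have hd0 : (hasseDeriv j f).natDegree = 0 := by
          have := natDegree_hasseDeriv_le f j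
          omega
        have := Polynomial.eq_C_of_natDegree_eq_zero hd0
        rwa [hasseDeriv_coeff, Nat.zero_add, Nat.choose_self, Nat.cast_one, one_mul] at this
      rw [coeff_sub, coeff_sub, coeff_C, if_neg (by omega), sub_zero,
          ← taylor_apply, taylor_coeff, hhd, eval_C, sub_self]
    have hPtop : P.coeff (m - 1) = 0 := by
      rcases eq_or_ne P 0 with h | h
      · simp [h]
      · have hP1 : 1 ≤ P.natDegree := by
          rcases Nat.eq_zero_or_pos P.natDegree with h0 | h0
          · exact absurd (by rw [Polynomial.eq_C_of_natDegree_eq_zero h0, hP0, map_zero]) h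
          · exact h0
        have hdlt : P.natDegree < (P ^ p).natDegree := by
          rw [natDegree_pow]
          have := hp.two_le
          nlinarith
        have hdeq : (P - P ^ p).natDegree = p * P.natDegree := by
          rw [natDegree_sub_eq_right_of_natDegree_lt hdlt, natDegree_pow]
        rw [hEq] at hgy
        rw [hdeq] at hgy
        refine coeff_eq_zero_of_natDegree_lt ?_
        have := hp.two_le
        nlinarith
    have := witness_coeff hp f y P hP0 hEq (m - 1) (by omega)
    rw [← hF] at this
    rw [← this, hPtop]
  have hsub : Sf p f ⊆ (F.roots.toFinset : Set k) := by
    intro y hy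
    simp only [Finset.coe_sort_coe, Multiset.mem_toFinset, Finset.mem_coe,
      mem_roots hFne, IsRoot.def]
    exact hroot y hy
  have hfin : (Sf p f).Finite := Set.Finite.subset (F.roots.toFinset : Set k).toFinite hsub
  refine ⟨hfin, ?_⟩
  calc (Sf p f).ncard ≤ ((F.roots.toFinset : Set k)).ncard :=
        Set.ncard_le_ncard hsub (F.roots.toFinset : Set k).toFinite
  _ = F.roots.toFinset.card := Set.ncard_coe_finset _
  _ ≤ Multiset.card F.roots := Multiset.toFinset_card_le _
  _ ≤ F.natDegree := card_roots' F
  _ ≤ (m - 1) ^ 2 := hFdeg
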